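/- For any indices 1 ≤ i, j ≤ n-1, the 2×2 minor of the Farey determinants matrix satisfies d_{ij}·d_{(i+1)(j+1)} − d_{i(j+1)}·d_{(i+1)j} = 1. -/

import Mathlib

/-- The Farey set of order `N`: rationals in `[0,1]` with denominator at most `N`. -/
def farey (N : ℕ) : Set ℚ := {q | 0 ≤ q ∧ q ≤ 1 ∧ q.den ≤ N}

/-- `x` and `y` are consecutive (neighbors) in the Farey sequence `F_N`. -/
def fareyNeighbors (N : ℕ) (x y : ℚ) : Prop :=
  x ∈ farey N ∧ y ∈ farey N ∧ x < y ∧ ∀ z ∈ farey N, ¬(x < z ∧ z < y)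

/-- The Farey sequence `F_N` as an ascending list of rationals. -/
def fareyList (N : ℕ) : List ℚ :=
  ((Finset.range (N + 1)).biUnion fun k =>
    (Finset.range (k + 1)).image fun h : ℕ => (h : ℚ) / (k : ℚ)).sort (· ≤ ·)

/-- The Farey determinants matrix entry `d_{ij} = h_j k_i - h_i k_j` (0-based indices). -/
def dM (N : ℕ) (i j : ℕ) : ℤ :=
  ((fareyList N).getD j 0).num * (((fareyList N).getD i 0).den : ℤ) -
    ((fareyList N).getD i 0).num * (((fareyList N).getD j 0).den : ℤ)



lemma div_lt_div_iff_int {a b c d : ℤ} (hb : 0 < b) (hd : 0 < d) :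
    (a:ℚ)/b < (c:ℚ)/d ↔ a*d < c*b := by
  rw [div_lt_div_iff₀ (by exact_mod_cast hb) (by exact_mod_cast hd)]
  exact_mod_cast Iff.rfl

lemma rat_lt_iff (x y : ℚ) : x < y ↔ x.num * (y.den:ℤ) < y.num * (x.den:ℤ) := by
  have h := div_lt_div_iff_int (a := x.num) (c := y.num)
    (Int.natCast_pos.mpr x.pos) (Int.natCast_pos.mpr y.pos)
  rw [show ((x.den:ℤ):ℚ) = (x.den:ℚ) by push_cast; ring,
      show ((y.den:ℤ):ℚ) = (y.den:ℚ) by push_cast; ring,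
      Rat.num_div_den, Rat.num_div_den] at h
  exact h

lemma exists_succ {N : ℕ} (x : ℚ) (hx0 : 0 ≤ x) (hx1 : x < 1)
    (hxden : x.den ≤ N) :
    ∃ r : ℚ, (0 ≤ r ∧ r ≤ 1 ∧ r.den ≤ N) ∧ x < r ∧
      r.num * (x.den : ℤ) - x.num * (r.den : ℤ) = 1 ∧
      ∀ z : ℚ, z.den ≤ N → x < z → z < r → False := by
  set a : ℤ := x.num with ha
  set b : ℤ := (x.den : ℤ) with hbdef
  have hb : 0 < b := Int.natCast_pos.mpr x.pos
  have hbN : b ≤ (N : ℤ) := by rw [hbdef]; exact_mod_cast hxden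
  have ha0 : 0 ≤ a := Rat.num_nonneg.mpr hx0
  have hab : a < b := by
    have := (rat_lt_iff x 1).mp hx1
    simpa using this
  -- coprimality of a and b
  have hcop : IsCoprime a b := by
    rw [Int.isCoprime_iff_gcd_eq_one]
    exact x.reduced
  obtain ⟨u, v, huv⟩ := hcop
  -- q0 with b ∣ a * q0 + 1
  set q0 : ℤ := -u with hq0def
  have hdvd0 : b ∣ a * q0 + 1 := ⟨v, by linear_combination -huv⟩
  -- q in (N - b, N] congruent to q0 mod b
  set q : ℤ := (N : ℤ) - (((N : ℤ) - q0) % b) with hqdef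
  have hm0 : 0 ≤ ((N : ℤ) - q0) % b := Int.emod_nonneg _ hb.ne'
  have hmlt : ((N : ℤ) - q0) % b < b := Int.emod_lt_of_pos _ hb
  have hqN : q ≤ (N : ℤ) := by omega
  have hqgt : (N : ℤ) - b < q := by omega
  have hq : 0 < q := by omega
  have hdvd : b ∣ a * q + 1 := by
    have hmod : ((N : ℤ) - q0) % b = ((N : ℤ) - q0) - b * (((N : ℤ) - q0) / b) :=
      Int.emod_def _ _
    have : a * q + 1 = (a * q0 + 1) + a * (b * (((N : ℤ) - q0) / b)) := by
      rw [hqdef, hmod]; ring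
    rw [this]
    exact dvd_add hdvd0 ⟨a * (((N : ℤ) - q0) / b), by ring⟩
  set p : ℤ := (a * q + 1) / b with hpdef
  have hpb : p * b = a * q + 1 := Int.ediv_mul_cancel hdvd
  have hp : 0 < p := by nlinarith [hpb, mul_nonneg ha0 hq.le, hb]
  have hpq : p ≤ q := by nlinarith [hpb, hab, hq, hb]
  have hcop2 : IsCoprime p q := ⟨b, -a, by linarith [hpb]⟩
  have hcopn : Nat.Coprime p.natAbs q.natAbs := Int.isCoprime_iff_gcd_eq_one.mp hcop2
  set r : ℚ := (p : ℚ) / (q : ℚ) with hrdef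
  have hrnum : r.num = p := Rat.num_div_eq_of_coprime hq hcopn
  have hrden : (r.den : ℤ) = q := Rat.den_div_eq_of_coprime hq hcopn
  have hqQ : (0:ℚ) < (q:ℚ) := by exact_mod_cast hq
  have hxr : x < r := by
    rw [rat_lt_iff, hrnum, hrden, ← ha, ← hbdef]
    linarith [hpb]
  refine ⟨r, ⟨?_, ?_, ?_⟩, hxr, ?_, ?_⟩
  · rw [hrdef]; positivity
  · rw [hrdef, div_le_one hqQ]; exact_mod_cast hpq
  · have : (r.den : ℤ) ≤ (N : ℤ) := by rw [hrden]; exact hqN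
    exact_mod_cast this
  · rw [hrnum, hrden]; linarith [hpb]
  · intro z hzden hxz hzr
    set m : ℤ := z.num with hm
    set n : ℤ := (z.den : ℤ) with hn
    have hn0 : 0 < n := Int.natCast_pos.mpr z.pos
    have hnN : n ≤ (N : ℤ) := by rw [hn]; exact_mod_cast hzden
    have h1 : a * n < m * b := by
      have := (rat_lt_iff x z).mp hxz
      rwa [← ha, ← hbdef, ← hm, ← hn] at this
    have h2 : m * q < p * n := by
      have := (rat_lt_iff z r).mp hzr
      rwa [hrnum, hrden, ← hm, ← hn] at this
    -- n = q*(m*b - a*n) + b*(p*n - m*q) ≥ q + b > N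
    have key : n = q * (m * b - a * n) + b * (p * n - m * q) := by
      linear_combination (-n) * hpb
    have e1 : a * n + 1 ≤ m * b := Int.lt_iff_add_one_le.mp h1
    have e2 : m * q + 1 ≤ p * n := Int.lt_iff_add_one_le.mp h2
    have f1 : q * 1 ≤ q * (m * b - a * n) := mul_le_mul_of_nonneg_left (by linarith) hq.le
    have f2 : b * 1 ≤ b * (p * n - m * q) := mul_le_mul_of_nonneg_left (by linarith) hb.le
    linarith

lemma rat_num_le_den {q : ℚ} (h : q ≤ 1) : q.num ≤ (q.den : ℤ) := by
  by_contra hc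
  push_neg at hc
  have := (rat_lt_iff 1 q).mpr (by simpa using hc)
  exact absurd this (not_lt.mpr h)

def fareyFinset (N : ℕ) : Finset ℚ :=
  (Finset.range (N + 1)).biUnion fun k =>
    (Finset.range (k + 1)).image fun h : ℕ => (h : ℚ) / (k : ℚ)

lemma mem_fareyFinset {N : ℕ} (hN : 1 ≤ N) (q : ℚ) :
    q ∈ fareyFinset N ↔ 0 ≤ q ∧ q ≤ 1 ∧ q.den ≤ N := by
  simp only [fareyFinset, Finset.mem_biUnion, Finset.mem_image, Finset.mem_range,
    Nat.lt_succ_iff]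
  constructor
  · rintro ⟨k, hk, h, hh, rfl⟩
    rcases Nat.eq_zero_or_pos k with rfl | hkpos
    · interval_cases h
      simp [hN]
    · have hkQ : (0:ℚ) < k := by exact_mod_cast hkpos
      refine ⟨by positivity, div_le_one_of_le₀ (by exact_mod_cast hh) hkQ.le, ?_⟩
      have hdvd : (((h:ℚ)/(k:ℚ)).den : ℤ) ∣ (k : ℤ) := by
        rw [show ((h:ℚ)/(k:ℚ)) = ((h:ℤ):ℚ)/((k:ℤ):ℚ) by push_cast; ring,
          ← Rat.divInt_eq_div]
        exact Rat.den_dvd _ _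
      have : ((h:ℚ)/(k:ℚ)).den ∣ k := by exact_mod_cast hdvd
      exact le_trans (Nat.le_of_dvd hkpos this) hk
  · rintro ⟨h0, h1, hden⟩
    refine ⟨q.den, hden, q.num.toNat, ?_, ?_⟩
    · have h2 : q.num ≤ (q.den : ℤ) := rat_num_le_den h1
      omega
    · have hnum : (q.num.toNat : ℤ) = q.num := Int.toNat_of_nonneg (Rat.num_nonneg.mpr h0)
      have hc : ((q.num.toNat : ℕ) : ℚ) = (q.num : ℚ) := by exact_mod_cast hnum
      rw [hc, Rat.num_div_den]

lemma fareyList_eq (N : ℕ) : fareyList N = (fareyFinset N).sort (· ≤ ·) := rfl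

lemma consec_det (N : ℕ) (i : ℕ) (hi : i + 1 < (fareyList N).length) :
    ((fareyList N).getD (i+1) 0).num * (((fareyList N).getD i 0).den : ℤ) -
      ((fareyList N).getD i 0).num * (((fareyList N).getD (i+1) 0).den : ℤ) = 1 := by
  have hN : 1 ≤ N := by
    by_contra hc
    push_neg at hc
    interval_cases N
    have hlen : (fareyList 0).length = 1 := by
      rw [fareyList_eq, Finset.length_sort]
      simp [fareyFinset]
    omega
  set l := fareyList N with hl
  have hi0 : i < l.length := Nat.lt_of_succ_lt hi
  have hsorted : l.Pairwise (· < ·) := by rw [hl, fareyList_eq]; exact List.sortedLT_iff_pairwise.mp (Finset.sortedLT_sort _)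
  set x : ℚ := l.get ⟨i, hi0⟩ with hx
  set y : ℚ := l.get ⟨i+1, hi⟩ with hy
  have hgx : l.getD i 0 = x := List.getD_eq_get l 0 ⟨i, hi0⟩
  have hgy : l.getD (i+1) 0 = y := List.getD_eq_get l 0 ⟨i+1, hi⟩
  have hxy : x < y := List.pairwise_iff_get.mp hsorted _ _ (by simp)
  have hxmem : x ∈ fareyFinset N := by
    rw [← Finset.mem_sort (· ≤ ·), ← fareyList_eq]; exact List.get_mem l _
  have hymem : y ∈ fareyFinset N := by
    rw [← Finset.mem_sort (· ≤ ·), ← fareyList_eq]; exact List.get_mem l _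
  obtain ⟨hx0, hx1', hxden⟩ := (mem_fareyFinset hN x).mp hxmem
  obtain ⟨hy0, hy1, hyden⟩ := (mem_fareyFinset hN y).mp hymem
  have hx1 : x < 1 := lt_of_lt_of_le hxy hy1
  obtain ⟨r, hrmem, hxr, hdet, hbetween⟩ := exists_succ (N := N) x hx0 hx1 hxden
  -- y ≤ r
  have hrl : r ∈ l := by
    rw [hl, fareyList_eq, Finset.mem_sort]
    exact (mem_fareyFinset hN r).mpr hrmem
  obtain ⟨jr, hjr⟩ := List.mem_iff_get.mp hrl
  have hij : (i:ℕ) < jr.val := by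
    by_contra hc
    push_neg at hc
    rcases Nat.lt_or_ge jr.val i with h' | h'
    · have : r < x := by
        rw [← hjr, hx]
        exact List.pairwise_iff_get.mp hsorted _ _ h'
      exact absurd hxr (not_lt.mpr this.le)
    · have hji : jr.val = i := le_antisymm hc h'
      have : r = x := by rw [← hjr, hx]; congr 1; exact Fin.ext hji
      exact absurd hxr (by rw [this]; exact lt_irrefl x)
  have hyr : y ≤ r := by
    rcases Nat.lt_or_ge (i+1) jr.val with h' | h'
    · have : y < r := by
        rw [← hjr, hy]
        exact List.pairwise_iff_get.mp hsorted _ _ h'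
      exact this.le
    · have : jr.val = i + 1 := le_antisymm h' hij
      rw [← hjr, hy]
      exact le_of_eq (congrArg l.get (Fin.ext this.symm))
  have hyeq : y = r := by
    rcases eq_or_lt_of_le hyr with h | h
    · exact h
    · exact absurd (hbetween y hyden hxy h) not_false
  rw [hgx, hgy, hyeq]
  exact hdet


theorem dM_minor_one (N : ℕ) (i j : ℕ) (hi : i + 1 < (fareyList N).length)
    (hj : j + 1 < (fareyList N).length) :
    dM N i j * dM N (i + 1) (j + 1) - dM N i (j + 1) * dM N (i + 1) j = 1 := by
  have Hi := consec_det N i hi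
  have Hj := consec_det N j hj
  unfold dM
  linear_combination
    (((fareyList N).getD (j+1) 0).num * (((fareyList N).getD j 0).den : ℤ) -
      ((fareyList N).getD j 0).num * (((fareyList N).getD (j+1) 0).den : ℤ)) * Hi + Hj
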